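/- Assume d^* < ∞, sup_j (k_{j+1} − k_j) = K < ∞, and lim_{k→∞} d_k = 0. If the form t_{X,β} is lower semibounded, i.e., there exists C ≥ 0 with t_{X,β}[f] ≥ −C ∫₀^∞|f|² dx for all f in its domain, then lim_{j→∞} 1/|β_{k_j}| = 0. -/

import Mathlib

open MeasureTheory Set Filter

noncomputable section

/-- A function that is *piecewise `H¹`* with respect to the partition points
`x 0 < x 1 < x 2 < ⋯` of `[0,∞)`: on each interval `Δ_{k+1} = [x k, x (k+1)]` it is
absolutely continuous with derivative `f' ∈ L²`, encoded via the fundamental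
theorem of calculus; `fr k = f(x k +)` and `fl (k+1) = f(x (k+1) −)` are the
one-sided limits at the nodes. -/
structure PW1 (x : ℕ → ℝ) where
  f : ℝ → ℝ
  f' : ℝ → ℝ
  fr : ℕ → ℝ
  fl : ℕ → ℝ
  int_d : ∀ k, IntegrableOn f' (Icc (x k) (x (k + 1))) volume
  sq_d : ∀ k, IntegrableOn (fun t => f' t ^ 2) (Icc (x k) (x (k + 1))) volume
  ftc : ∀ k, ∀ t ∈ Ioo (x k) (x (k + 1)), f t = fr k + ∫ s in Ioc (x k) t, f' s
  fl_eq : ∀ k, fl (k + 1) = fr k + ∫ s in Ioc (x k) (x (k + 1)), f' s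

/-- The jump `f(x_{k+1}+) − f(x_{k+1}−)` of a piecewise `H¹` function at the
interior node `x (k+1)` (the paper's node `x_{k+1}`). -/
def PW1.jump {x : ℕ → ℝ} (F : PW1 x) (k : ℕ) : ℝ := F.fr (k + 1) - F.fl (k + 1)

/-- Membership in the domain of the form `t_{X,β,q}`: `f ∈ L²(0,∞)`,
`∫₀^∞ |f'|² < ∞`, `∫₀^∞ |q| |f|² < ∞` and `Σ_k |f(x_k+) − f(x_k−)|²/|β_k| < ∞`. -/
def MemDom (x : ℕ → ℝ) (q : ℝ → ℝ) (β : ℕ → ℝ) (F : PW1 x) : Prop :=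
  IntegrableOn (fun t => F.f t ^ 2) (Ioi 0) volume ∧
  IntegrableOn (fun t => F.f' t ^ 2) (Ioi 0) volume ∧
  IntegrableOn (fun t => |q t| * F.f t ^ 2) (Ioi 0) volume ∧
  Summable (fun k => F.jump k ^ 2 / |β (k + 1)|)

/-- The value of the quadratic form
`t_{X,β,q}[f] = ∫₀^∞ (|f'|² + q |f|²) dx + Σ_k |f(x_k+) − f(x_k−)|²/β_k`. -/
def formVal (x : ℕ → ℝ) (q : ℝ → ℝ) (β : ℕ → ℝ) (F : PW1 x) : ℝ :=
  (∫ t in Ioi (0 : ℝ), (F.f' t ^ 2 + q t * F.f t ^ 2)) +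
    ∑' k, F.jump k ^ 2 / β (k + 1)


/-- `dminus x κ j` is the paper's `d_{j+1}^- = x_{k_{j+1}} − x_{k_j}` (with `k_0 = 0`),
the distance between the consecutive nodes `x_{k_j}` supporting negative
intensities; `κ j` is the paper's index `k_{j+1}`. -/
def dminus (x : ℕ → ℝ) (κ : ℕ → ℕ) : ℕ → ℝ
  | 0 => x (κ 0) - x 0
  | j + 1 => x (κ (j + 1)) - x (κ j)

/-- `kprev κ j` is the paper's `k_j` when `κ j` is the paper's `k_{j+1}`
(so `kprev κ 0 = k_0 = 0`). -/
def kprev (κ : ℕ → ℕ) : ℕ → ℕ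
  | 0 => 0
  | j + 1 => κ j

/-- Key estimate: testing the form with the indicator function of
`(x a, x b)` for two negative nodes `a < b` yields `1/|β a| ≤ C (x b - x a)`. -/
lemma corKey (x : ℕ → ℝ) (hx0 : x 0 = 0) (hmono : StrictMono x) (β : ℕ → ℝ)
    (C : ℝ)
    (hsb : ∀ F : PW1 x, MemDom x (fun _ => 0) β F →
      formVal x (fun _ => 0) β F ≥ -C * ∫ t in Ioi (0 : ℝ), F.f t ^ 2)
    (a b : ℕ) (ha : 1 ≤ a) (hab : a < b) (hβa : β a < 0) (hβb : β b < 0) :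
    1 / |β a| ≤ C * (x b - x a) := by
  set fr : ℕ → ℝ := fun k => if a ≤ k ∧ k < b then 1 else 0 with hfr
  set f : ℝ → ℝ := (Ioo (x a) (x b)).indicator (fun _ => 1) with hf
  have hfsq : ∀ t, f t ^ 2 = f t := by
    intro t
    by_cases h : t ∈ Ioo (x a) (x b) <;> simp [hf, Set.indicator_apply, h]
  have hxa : 0 < x a := by
    rw [← hx0]; exact hmono (by omega)
  have hxab : x a < x b := hmono hab
  have hfmeas : Integrable f volume := by
    rw [hf]
    refine (integrable_indicator_iff measurableSet_Ioo).2 ?_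
    exact integrableOn_const measure_Ioo_lt_top.ne
  let F : PW1 x :=
    { f := f
      f' := fun _ => 0
      fr := fr
      fl := fun k => fr (k - 1)
      int_d := fun k => (integrable_zero _ _ _).integrableOn
      sq_d := fun k => by
        simpa using ((integrable_zero ℝ ℝ volume).integrableOn :
          IntegrableOn (fun _ => (0:ℝ)) (Icc (x k) (x (k+1))) volume)
      ftc := by
        intro k t ht
        have h0 : (∫ s in Ioc (x k) t, (0:ℝ)) = 0 := integral_zero _ _
        rw [h0, add_zero]
        by_cases hk : a ≤ k ∧ k < b
        · have ht1 : t ∈ Ioo (x a) (x b) :=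
            ⟨lt_of_le_of_lt (hmono.monotone hk.1) ht.1,
             lt_of_lt_of_le ht.2 (hmono.monotone hk.2)⟩
          simp [hf, hfr, Set.indicator_of_mem ht1, hk]
        · have ht1 : t ∉ Ioo (x a) (x b) := by
            intro hmem
            by_cases h1 : k < a
            · exact absurd hmem.1
                (not_lt.2 (le_of_lt (lt_of_lt_of_le ht.2 (hmono.monotone h1))))
            · have h2 : b ≤ k := by omega
              exact absurd hmem.2
                (not_lt.2 (le_of_lt (lt_of_le_of_lt (hmono.monotone h2) ht.1)))
          simp [hf, hfr, Set.indicator_of_notMem ht1, hk]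
      fl_eq := by intro k; simp }
  have hjump0 : ∀ k : ℕ, k ∉ ({a - 1, b - 1} : Finset ℕ) → F.jump k = 0 := by
    intro k hk
    simp only [Finset.mem_insert, Finset.mem_singleton, not_or] at hk
    have hiff : (a ≤ k + 1 ∧ k + 1 < b) ↔ (a ≤ k ∧ k < b) := by omega
    show fr (k + 1) - fr (k + 1 - 1) = 0
    simp only [Nat.add_sub_cancel, hfr]
    rw [if_congr hiff rfl rfl]
    exact sub_self _
  have hb1 : a - 1 ≠ b - 1 := by omega
  have ea : a - 1 + 1 = a := by omega
  have eb : b - 1 + 1 = b := by omega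
  have hja : F.jump (a - 1) = 1 := by
    show fr (a - 1 + 1) - fr (a - 1 + 1 - 1) = 1
    rw [ea]
    simp only [hfr]
    rw [if_pos ⟨le_refl a, hab⟩, if_neg (by omega)]
    norm_num
  have hjb : F.jump (b - 1) = -1 := by
    show fr (b - 1 + 1) - fr (b - 1 + 1 - 1) = -1
    rw [eb]
    simp only [hfr]
    rw [if_neg (by omega), if_pos ⟨by omega, by omega⟩]
    norm_num
  have hsum : ∑' k, F.jump k ^ 2 / β (k + 1) = 1 / β a + 1 / β b := by
    rw [tsum_eq_sum (s := {a - 1, b - 1})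
      (fun k hk => by rw [hjump0 k hk]; simp)]
    rw [Finset.sum_pair hb1, hja, hjb, ea, eb]
    norm_num
  have hmem : MemDom x (fun _ => 0) β F := by
    refine ⟨?_, ?_, ?_, ?_⟩
    · show IntegrableOn (fun t => f t ^ 2) (Ioi 0) volume
      rw [funext hfsq]
      exact hfmeas.integrableOn
    · show IntegrableOn (fun t => (0:ℝ) ^ 2) (Ioi 0) volume
      simpa using ((integrable_zero ℝ ℝ volume).integrableOn :
        IntegrableOn (fun _ => (0:ℝ)) (Ioi 0) volume)
    · show IntegrableOn (fun t => |(0:ℝ)| * f t ^ 2) (Ioi 0) volume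
      simpa using ((integrable_zero ℝ ℝ volume).integrableOn :
        IntegrableOn (fun _ => (0:ℝ)) (Ioi 0) volume)
    · refine summable_of_ne_finset_zero (s := {a - 1, b - 1}) ?_
      intro k hk
      rw [hjump0 k hk]
      simp
  have hint2 : ∫ t in Ioi (0:ℝ), f t ^ 2 = x b - x a := by
    rw [funext hfsq, hf]
    rw [MeasureTheory.integral_indicator measurableSet_Ioo]
    rw [Measure.restrict_restrict measurableSet_Ioo]
    have h2 : Ioo (x a) (x b) ∩ Ioi 0 = Ioo (x a) (x b) := by
      refine inter_eq_left.2 ?_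
      intro t ht
      exact lt_trans hxa ht.1
    rw [h2]
    simp [Real.volume_Ioo, ENNReal.toReal_ofReal (le_of_lt (sub_pos.2 hxab)), hxab.le]
  have hform : formVal x (fun _ => 0) β F = 1 / β a + 1 / β b := by
    have h0 : formVal x (fun _ => 0) β F
        = (∫ t in Ioi (0:ℝ), ((0:ℝ) ^ 2 + 0 * f t ^ 2))
          + ∑' k, F.jump k ^ 2 / β (k + 1) := rfl
    rw [h0, hsum]
    norm_num
  have hineq := hsb F hmem
  rw [hform] at hineq
  have hI : (∫ t in Ioi (0:ℝ), F.f t ^ 2) = x b - x a := hint2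
  rw [hI] at hineq
  have hbneg : 1 / β b < 0 := div_neg_of_pos_of_neg one_pos hβb
  rw [abs_of_neg hβa, div_neg]
  linarith

/-- **Corollary 2.14**: if `d^* < ∞`, `sup_j (k_{j+1} − k_j) = K < ∞` and
`d_k → 0`, then lower semiboundedness of `t_{X,β}` forces `1/|β_{k_j}| → 0`. -/
theorem stmt_9 (x : ℕ → ℝ) (hx0 : x 0 = 0) (hmono : StrictMono x)
    (hxtop : Tendsto x atTop atTop)
    (β : ℕ → ℝ) (hβ : ∀ k, β (k + 1) ≠ 0)
    (κ : ℕ → ℕ) (hκmono : StrictMono κ) (hκ1 : ∀ j, 1 ≤ κ j)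
    (hκneg : ∀ j, β (κ j) < 0)
    (hκall : ∀ n, 1 ≤ n → β n < 0 → ∃ j, κ j = n)
    (D : ℝ) (hD : ∀ k, x (k + 1) - x k ≤ D)
    (K : ℕ) (hK : ∀ j, κ (j + 1) ≤ κ j + K)
    (hd0 : Tendsto (fun k => x (k + 1) - x k) atTop (nhds 0))
    (C : ℝ) (hC : 0 ≤ C)
    (hsb : ∀ F : PW1 x, MemDom x (fun _ => 0) β F →
      formVal x (fun _ => 0) β F ≥ -C * ∫ t in Ioi (0 : ℝ), F.f t ^ 2) :
    Tendsto (fun j => 1 / |β (κ j)|) atTop (nhds 0) := by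
  have hκtop : Tendsto κ atTop atTop := hκmono.tendsto_atTop
  have key1 : ∀ j, 1 / |β (κ j)| ≤ C * (x (κ (j + 1)) - x (κ j)) := fun j =>
    corKey x hx0 hmono β C hsb (κ j) (κ (j + 1)) (hκ1 j)
      (hκmono (Nat.lt_succ_self j)) (hκneg j) (hκneg (j + 1))
  have hterm : ∀ m : ℕ, Tendsto (fun j => x (κ j + m + 1) - x (κ j + m))
      atTop (nhds 0) := by
    intro m
    have h1 : Tendsto (fun k : ℕ => k + m) atTop atTop := tendsto_add_atTop_nat m
    exact hd0.comp (h1.comp hκtop)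
  have hgap : Tendsto (fun j => x (κ j + K) - x (κ j)) atTop (nhds 0) := by
    have h3 := tendsto_finset_sum (Finset.range K) (fun m _ => hterm m)
    have heq : ∀ j, (∑ m ∈ Finset.range K, (x (κ j + m + 1) - x (κ j + m)))
        = x (κ j + K) - x (κ j) := by
      intro j
      have h4 := Finset.sum_range_sub (f := fun m => x (κ j + m)) K
      simpa [add_assoc] using h4
    have h5 : Tendsto (fun j => ∑ m ∈ Finset.range K, (x (κ j + m + 1) - x (κ j + m)))
        atTop (nhds 0) := by simpa using h3
    exact h5.congr heq
  have hgap2 : Tendsto (fun j => C * (x (κ (j + 1)) - x (κ j))) atTop (nhds 0) := by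
    have h0 : Tendsto (fun j => C * (x (κ j + K) - x (κ j))) atTop (nhds 0) := by
      simpa using hgap.const_mul C
    refine squeeze_zero (fun j => ?_) (fun j => ?_) h0
    · exact mul_nonneg hC
        (sub_nonneg.2 (hmono.monotone (le_of_lt (hκmono (Nat.lt_succ_self j)))))
    · exact mul_le_mul_of_nonneg_left
        (sub_le_sub_right (hmono.monotone (hK j)) _) hC
  exact squeeze_zero (fun j => one_div_nonneg.2 (abs_nonneg _)) key1 hgap2

end
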